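/- Let q ∈ (1,∞), let (X, μ) be a measure space with μ a finite measure, and let a : X → ℝ be a bounded measurable function with a ≥ 0 μ-a.e. and ∫_X a dμ > 0. Then for every u ∈ L^q(X, μ) there exists a unique s ∈ ℝ such that I_a(u + s) = ∫_X a|u + s|^{q−2}(u + s) dμ = 0. -/

import Mathlib

open MeasureTheory Real Filter Topology


lemma phi_eq_of_nonneg {q t : ℝ} (hq : 1 < q) (ht : 0 ≤ t) :
    |t| ^ (q - 2) * t = t ^ (q - 1) := by
  rcases eq_or_lt_of_le ht with h | h
  · simp [← h, Real.zero_rpow (by linarith : q - 1 ≠ 0)]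
  · rw [abs_of_pos h, ← Real.rpow_add_one h.ne' (q - 2)]
    ring_nf

lemma phi_eq_of_neg {q t : ℝ} (hq : 1 < q) (ht : t < 0) :
    |t| ^ (q - 2) * t = -((-t) ^ (q - 1)) := by
  rw [abs_of_neg ht, show q - 1 = q - 2 + 1 by ring,
    Real.rpow_add_one (by intro h; nlinarith [neg_pos.mpr ht] : -t ≠ 0) (q - 2)]
  ring

lemma phi_neg {q t : ℝ} : |(-t)| ^ (q - 2) * (-t) = -(|t| ^ (q - 2) * t) := by
  rw [abs_neg]; ring

lemma phi_abs {q t : ℝ} (hq : 1 < q) : |(|t| ^ (q - 2) * t)| = |t| ^ (q - 1) := by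
  rcases eq_or_ne t 0 with rfl | h
  · simp [Real.zero_rpow (by linarith : q - 1 ≠ 0)]
  · rw [abs_mul, abs_of_nonneg (Real.rpow_nonneg (abs_nonneg t) _),
      ← Real.rpow_add_one (abs_ne_zero.mpr h) (q - 2)]
    ring_nf

lemma phi_strictMono {q : ℝ} (hq : 1 < q) : StrictMono fun t : ℝ => |t| ^ (q - 2) * t := by
  have hq1 : (0:ℝ) < q - 1 := by linarith
  intro s t hst
  simp only
  rcases le_or_gt 0 s with hs | hs
  · rw [phi_eq_of_nonneg hq hs, phi_eq_of_nonneg hq (hs.trans hst.le)]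
    exact Real.rpow_lt_rpow hs hst hq1
  · rw [phi_eq_of_neg hq hs]
    rcases le_or_gt 0 t with ht | ht
    · rw [phi_eq_of_nonneg hq ht]
      have h1 : 0 < (-s) ^ (q - 1) := Real.rpow_pos_of_pos (by linarith) _
      have h2 : 0 ≤ t ^ (q - 1) := Real.rpow_nonneg ht _
      linarith
    · rw [phi_eq_of_neg hq ht]
      have : (-t) ^ (q - 1) < (-s) ^ (q - 1) :=
        Real.rpow_lt_rpow (by linarith) (by linarith) hq1
      linarith

lemma phi_continuous {q : ℝ} (hq : 1 < q) : Continuous fun t : ℝ => |t| ^ (q - 2) * t := by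
  rw [continuous_iff_continuousAt]
  intro t
  rcases eq_or_ne t 0 with rfl | h
  · have h0 : Tendsto (fun t : ℝ => |t| ^ (q - 2) * t) (𝓝 0) (𝓝 0) := by
      apply squeeze_zero_norm' (a := fun t : ℝ => |t| ^ (q - 1))
      · filter_upwards with t
        rw [Real.norm_eq_abs, phi_abs hq]
      · have : ContinuousAt (fun t : ℝ => |t| ^ (q - 1)) 0 :=
          (Real.continuousAt_rpow_const _ _ (Or.inr (by linarith))).comp
            continuous_abs.continuousAt
        have h00 : |(0:ℝ)| ^ (q - 1) = 0 := by
          simp [Real.zero_rpow (by linarith : q - 1 ≠ 0)]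
        simpa [ContinuousAt, h00, Real.zero_rpow (by linarith : q - 1 ≠ 0)] using this
    simpa [ContinuousAt] using h0
  · exact ((Real.continuousAt_rpow_const _ _ (Or.inl (abs_ne_zero.mpr h))).comp
      continuous_abs.continuousAt).mul continuousAt_id


lemma integrable_abs_rpow {X : Type*} [MeasurableSpace X] {μ : Measure X} [IsFiniteMeasure μ]
    {q r : ℝ} (hr : 0 < r) (hrq : r ≤ q) {w : X → ℝ}
    (hw : MemLp w (ENNReal.ofReal q) μ) :
    Integrable (fun x => |w x| ^ r) μ := by
  have h := hw.norm_rpow_div (ENNReal.ofReal r)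
  rw [ENNReal.toReal_ofReal hr.le] at h
  simp only [Real.norm_eq_abs] at h
  have h1 : (1 : ENNReal) ≤ ENNReal.ofReal q / ENNReal.ofReal r := by
    rw [ENNReal.le_div_iff_mul_le (Or.inl (by simp [hr])) (Or.inl ENNReal.ofReal_ne_top)]
    simpa using ENNReal.ofReal_le_ofReal hrq
  exact memLp_one_iff_integrable.mp (h.mono_exponent h1)

lemma integrable_a_phi {X : Type*} [MeasurableSpace X] {μ : Measure X} [IsFiniteMeasure μ]
    {q : ℝ} (hq : 1 < q) {a : X → ℝ} (ha_meas : Measurable a)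
    (ha_bdd : ∃ C : ℝ, ∀ x, |a x| ≤ C) {w : X → ℝ}
    (hw : MemLp w (ENNReal.ofReal q) μ) :
    Integrable (fun x => a x * |w x| ^ (q - 2) * w x) μ := by
  have hphi_meas : AEStronglyMeasurable (fun x => |w x| ^ (q - 2) * w x) μ :=
    (phi_continuous hq).comp_aestronglyMeasurable hw.aestronglyMeasurable
  have hphi : Integrable (fun x => |w x| ^ (q - 2) * w x) μ := by
    refine (integrable_abs_rpow (by linarith : (0:ℝ) < q - 1) (by linarith) hw).mono
      hphi_meas ?_
    filter_upwards with x
    rw [Real.norm_eq_abs, Real.norm_eq_abs, phi_abs hq,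
      abs_of_nonneg (Real.rpow_nonneg (abs_nonneg _) _)]
  have := hphi.bdd_mul (c := ha_bdd.choose) ha_meas.aestronglyMeasurable
    (Eventually.of_forall fun x => by simpa using ha_bdd.choose_spec x)
  simpa [mul_assoc] using this

lemma exists_pos_F {X : Type*} [MeasurableSpace X] (μ : Measure X) [IsFiniteMeasure μ]
    {q : ℝ} (hq : 1 < q) {a : X → ℝ} (ha_meas : Measurable a)
    (ha_bdd : ∃ C : ℝ, ∀ x, |a x| ≤ C) (ha_nonneg : ∀ᵐ x ∂μ, 0 ≤ a x)
    (ha_pos : 0 < ∫ x, a x ∂μ)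
    (u : X → ℝ) (hu : MemLp u (ENNReal.ofReal q) μ) :
    ∃ s : ℝ, 0 < ∫ x, a x * |u x + s| ^ (q - 2) * (u x + s) ∂μ := by
  obtain ⟨C₀, hC₀⟩ := ha_bdd
  set C : ℝ := max C₀ 0 with hCdef
  have hC : ∀ x, |a x| ≤ C := fun x => (hC₀ x).trans (le_max_left _ _)
  have hC0 : 0 ≤ C := le_max_right _ _
  have hE1 : (1:ℝ) ≤ 3 ^ (q - 1) :=
    Real.one_le_rpow (by norm_num) (by linarith)
  set D : ℝ := 2 * 3 ^ (q - 1) with hDdef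
  have hD0 : 0 < D := by positivity
  set I : ℝ := ∫ x, a x ∂μ with hIdef
  set J : ℝ := ∫ x, |u x| ^ q ∂μ with hJdef
  have hJint : Integrable (fun x => |u x| ^ q) μ :=
    integrable_abs_rpow (by linarith) le_rfl hu
  have hJ0 : 0 ≤ J := integral_nonneg fun x => Real.rpow_nonneg (abs_nonneg _) _
  have hInt_a : Integrable a μ := by
    refine (integrable_const C).mono' ha_meas.aestronglyMeasurable ?_
    filter_upwards with x using hC x
  set s : ℝ := max 2 ((4 * C * D * J + 1) / I) with hsdef
  have hs2 : (2:ℝ) ≤ s := le_max_left _ _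
  have hs0 : (0:ℝ) < s := by linarith
  have hw : MemLp (fun x => u x + s) (ENNReal.ofReal q) μ := hu.add (memLp_const s)
  have hFint : Integrable (fun x => a x * |u x + s| ^ (q - 2) * (u x + s)) μ :=
    integrable_a_phi hq ha_meas ⟨C, hC⟩ hw
  refine ⟨s, ?_⟩
  have key : ∀ᵐ x ∂μ, a x * (s/2) ^ (q-1) - (2*C*D/s) * |u x| ^ q
      ≤ a x * |u x + s| ^ (q - 2) * (u x + s) := by
    filter_upwards [ha_nonneg] with x hax
    rcases le_or_gt (-(s/2)) (u x) with h | h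
    · rw [mul_assoc (a x), phi_eq_of_nonneg hq (by linarith : (0:ℝ) ≤ u x + s)]
      have hphi : (s/2) ^ (q-1) ≤ (u x + s) ^ (q-1) :=
        Real.rpow_le_rpow (by linarith) (by linarith) (by linarith)
      have h1 := mul_le_mul_of_nonneg_left hphi hax
      have h2 : 0 ≤ (2*C*D/s) * |u x| ^ q :=
        mul_nonneg (by positivity) (Real.rpow_nonneg (abs_nonneg _) _)
      linarith
    · have hM : s/2 < |u x| := by
        rw [abs_of_neg (by linarith : u x < 0)]; linarith
      have hMpos : 0 < |u x| := by linarith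
      have h3 : |u x + s| ≤ 3 * |u x| := by
        calc |u x + s| ≤ |u x| + |s| := abs_add_le _ _
        _ ≤ 3 * |u x| := by rw [abs_of_pos hs0]; linarith
      have hb : |a x * |u x + s| ^ (q-2) * (u x + s)| ≤ C * (3 * |u x|) ^ (q-1) := by
        rw [mul_assoc (a x), abs_mul, phi_abs hq]
        exact mul_le_mul (hC x)
          (Real.rpow_le_rpow (abs_nonneg _) h3 (by linarith))
          (Real.rpow_nonneg (abs_nonneg _) _) hC0
      have hA : -(C * (3 ^ (q-1) * |u x| ^ (q-1))) ≤ a x * |u x + s| ^ (q-2) * (u x + s) := by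
        rw [← Real.mul_rpow (by norm_num) (abs_nonneg _)]
        exact neg_le_of_abs_le hb
      have hB : a x * (s/2) ^ (q-1) ≤ C * |u x| ^ (q-1) :=
        mul_le_mul (le_trans (le_abs_self _) (hC x))
          (Real.rpow_le_rpow (by linarith) hM.le (by linarith))
          (Real.rpow_nonneg (by linarith) _) hC0
      have hsplit : |u x| ^ q = |u x| ^ (q-1) * |u x| := by
        have := Real.rpow_add_one hMpos.ne' (q-1)
        simpa [sub_add_cancel] using this
      have hP0 : 0 ≤ |u x| ^ (q-1) := Real.rpow_nonneg (abs_nonneg _) _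
      have hT2 : 2*C*(3 ^ (q-1))*(|u x| ^ (q-1)) ≤ 2*C*D/s * |u x| ^ q := by
        rw [div_mul_eq_mul_div, le_div_iff₀ hs0, hsplit, hDdef]
        nlinarith [mul_nonneg (mul_nonneg (mul_nonneg hC0 hP0) (by linarith : (0:ℝ) ≤ 3 ^ (q-1))) (by linarith : (0:ℝ) ≤ 2*|u x| - s)]
      nlinarith [hA, hB, hT2, mul_nonneg hC0 hP0, hE1]
  have hLint : Integrable (fun x => a x * (s/2) ^ (q-1) - (2*C*D/s) * |u x| ^ q) μ :=
    (hInt_a.mul_const _).sub (hJint.const_mul _)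
  have hmono := integral_mono_ae hLint hFint key
  have heq : ∫ x, (a x * (s/2) ^ (q-1) - (2*C*D/s) * |u x| ^ q) ∂μ
      = I * (s/2) ^ (q-1) - (2*C*D/s) * J := by
    rw [integral_sub (hInt_a.mul_const _) (hJint.const_mul _),
      integral_mul_const, integral_const_mul]
  rw [heq] at hmono
  have h1 : 1 ≤ (s/2) ^ (q-1) := Real.one_le_rpow (by linarith) (by linarith)
  have h2 : I ≤ I * (s/2) ^ (q-1) := le_mul_of_one_le_right ha_pos.le h1
  have h3 : (4 * C * D * J + 1) / I ≤ s := le_max_right _ _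
  have h4 : 4 * C * D * J + 1 ≤ s * I := (div_le_iff₀ ha_pos).mp h3
  have h6 : (2*C*D/s) * J ≤ I/2 := by
    rw [div_mul_eq_mul_div, div_le_iff₀ hs0]
    nlinarith
  linarith

/-- `Ia μ a q w = ∫ a |w|^{q-2} w dμ` (with `|t|^{q-2} t = 0` when `t = 0`,
which holds automatically for the real power since the factor `w x` vanishes). -/
noncomputable def Ia {X : Type*} [MeasurableSpace X] (μ : Measure X) (a : X → ℝ) (q : ℝ)
    (w : X → ℝ) : ℝ :=
  ∫ x, a x * |w x| ^ (q - 2) * w x ∂μ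

theorem stmt5 {X : Type*} [MeasurableSpace X] (μ : Measure X) [IsFiniteMeasure μ]
    (q : ℝ) (hq : 1 < q) (a : X → ℝ) (ha_meas : Measurable a)
    (ha_bdd : ∃ C : ℝ, ∀ x, |a x| ≤ C) (ha_nonneg : ∀ᵐ x ∂μ, 0 ≤ a x)
    (ha_pos : 0 < ∫ x, a x ∂μ)
    (u : X → ℝ) (hu : MemLp u (ENNReal.ofReal q) μ) :
    ∃! s : ℝ, Ia μ a q (fun x => u x + s) = 0 := by
  obtain ⟨C₀, hC₀⟩ := ha_bdd
  set C : ℝ := max C₀ 0 with hCdef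
  have hC : ∀ x, |a x| ≤ C := fun x => (hC₀ x).trans (le_max_left _ _)
  have hC0 : 0 ≤ C := le_max_right _ _
  set F : ℝ → ℝ := fun s => ∫ x, a x * |u x + s| ^ (q - 2) * (u x + s) ∂μ with hFdef
  have hFIa : ∀ s : ℝ, Ia μ a q (fun x => u x + s) = F s := fun s => rfl
  have hwmem : ∀ s : ℝ, MemLp (fun x => u x + s) (ENNReal.ofReal q) μ :=
    fun s => hu.add (memLp_const s)
  have hFint : ∀ s : ℝ, Integrable (fun x => a x * |u x + s| ^ (q - 2) * (u x + s)) μ :=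
    fun s => integrable_a_phi hq ha_meas ⟨C, hC⟩ (hwmem s)
  have hInt_a : Integrable a μ := by
    refine (integrable_const C).mono' ha_meas.aestronglyMeasurable ?_
    filter_upwards with x using hC x
  -- strict monotonicity
  have hmono : StrictMono F := by
    intro s t hst
    have hgint : Integrable (fun x =>
        a x * (|u x + t| ^ (q - 2) * (u x + t) - |u x + s| ^ (q - 2) * (u x + s))) μ := by
      refine ((hFint t).sub (hFint s)).congr ?_
      filter_upwards with x
      simp only [Pi.sub_apply]
      ring
    have hpos : 0 < ∫ x,
        a x * (|u x + t| ^ (q - 2) * (u x + t) - |u x + s| ^ (q - 2) * (u x + s)) ∂μ := by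
      rw [integral_pos_iff_support_of_nonneg_ae _ hgint]
      · have hsup : 0 < μ (Function.support a) := by
          rw [← integral_pos_iff_support_of_nonneg_ae ha_nonneg hInt_a]
          exact ha_pos
        refine lt_of_lt_of_le hsup (measure_mono ?_)
        intro x hx
        have hne : |u x + t| ^ (q - 2) * (u x + t) - |u x + s| ^ (q - 2) * (u x + s) ≠ 0 :=
          sub_ne_zero.mpr (phi_strictMono hq (by linarith : u x + s < u x + t)).ne'
        exact mul_ne_zero hx hne
      · filter_upwards [ha_nonneg] with x hax
        have := phi_strictMono hq (by linarith : u x + s < u x + t)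
        have h2 : 0 ≤ |u x + t| ^ (q - 2) * (u x + t) - |u x + s| ^ (q - 2) * (u x + s) := by
          simp only at this; linarith
        exact mul_nonneg hax h2
    have heq : ∫ x,
        a x * (|u x + t| ^ (q - 2) * (u x + t) - |u x + s| ^ (q - 2) * (u x + s)) ∂μ
        = F t - F s := by
      rw [hFdef]
      simp only
      rw [← integral_sub (hFint t) (hFint s)]
      refine integral_congr_ae ?_
      filter_upwards with x using by ring
    rw [heq] at hpos
    linarith
  -- continuity
  have hcont : Continuous F := by
    rw [continuous_iff_continuousAt]
    intro s₀
    apply continuousAt_of_dominated (bound := fun x => C * |(|u x| + (|s₀| + 1))| ^ (q - 1))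
    · exact Eventually.of_forall fun s => (hFint s).aestronglyMeasurable
    · filter_upwards [Metric.ball_mem_nhds s₀ one_pos] with s hs
      rw [Metric.mem_ball, Real.dist_eq] at hs
      have hsabs : |s| ≤ |s₀| + 1 := by
        calc |s| = |(s - s₀) + s₀| := by ring_nf
        _ ≤ |s - s₀| + |s₀| := abs_add_le _ _
        _ ≤ |s₀| + 1 := by linarith
      filter_upwards with x
      rw [Real.norm_eq_abs, mul_assoc (a x), abs_mul, phi_abs hq]
      refine mul_le_mul (hC x) (Real.rpow_le_rpow (abs_nonneg _) ?_ (by linarith))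
        (Real.rpow_nonneg (abs_nonneg _) _) hC0
      calc |u x + s| ≤ |u x| + |s| := abs_add_le _ _
      _ ≤ |u x| + (|s₀| + 1) := by linarith
      _ ≤ |(|u x| + (|s₀| + 1))| := le_abs_self _
    · have hwm : MemLp (fun x => |u x| + (|s₀| + 1)) (ENNReal.ofReal q) μ := by
        have h1 : MemLp (fun x => |u x|) (ENNReal.ofReal q) μ := by
          simpa [Real.norm_eq_abs] using hu.norm
        exact h1.add (memLp_const _)
      exact (integrable_abs_rpow (by linarith) (by linarith) hwm).const_mul C
    · refine Eventually.of_forall fun x => ?_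
      have h2 : Continuous fun s : ℝ => a x * |u x + s| ^ (q - 2) * (u x + s) := by
        have h : Continuous fun s : ℝ => |u x + s| ^ (q - 2) * (u x + s) :=
          (phi_continuous hq).comp (continuous_const.add continuous_id)
        simp only [mul_assoc]; exact continuous_const.mul h
      exact h2.continuousAt
  -- existence of sign change
  obtain ⟨s₁, hs₁⟩ := exists_pos_F μ hq ha_meas ⟨C, hC⟩ ha_nonneg ha_pos u hu
  obtain ⟨s₂, hs₂⟩ := exists_pos_F μ hq ha_meas ⟨C, hC⟩ ha_nonneg ha_pos (fun x => -u x) hu.neg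
  have hFs₁ : 0 < F s₁ := hs₁
  have hFneg : F (-s₂) < 0 := by
    have heq : F (-s₂) = - ∫ x, a x * |(-u x) + s₂| ^ (q - 2) * ((-u x) + s₂) ∂μ := by
      rw [← integral_neg]
      refine integral_congr_ae (Eventually.of_forall fun x => ?_)
      simp only [Pi.neg_apply]
      have h1 : -u x + s₂ = -(u x + -s₂) := by ring
      rw [h1, abs_neg]; ring
    rw [heq]
    linarith
  have hlt : (-s₂ : ℝ) ≤ s₁ := (hmono.lt_iff_lt.mp (by linarith : F (-s₂) < F s₁)).le
  obtain ⟨s, -, hFs⟩ := intermediate_value_Icc hlt hcont.continuousOn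
    (Set.mem_Icc.mpr ⟨hFneg.le, hFs₁.le⟩)
  refine ⟨s, hFs, fun y hy => hmono.injective ?_⟩
  show F y = F s
  have hy' : F y = 0 := hy
  rw [hy', hFs]
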